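/- For every x > 0 and every integer k ≥ 1, the double inequality (k−1)!/x^k + k!/(2x^{k+1}) ≤ (−1)^{k+1} ψ^{(k)}(x) ≤ (k−1)!/x^k + k!/x^{k+1} holds. -/

import Mathlib

open Real

/-- The polygamma function `ψ^{(k)}`: the `k`-th derivative of the digamma function,
i.e. the `(k+1)`-st derivative of `ln ∘ Γ`. -/
noncomputable def polygamma (k : ℕ) : ℝ → ℝ :=
  iteratedDeriv (k + 1) (fun x : ℝ => Real.log (Real.Gamma x))

open Filter Topology

namespace PG

noncomputable def T (p : ℕ) (x : ℝ) : ℝ := ∑' n : ℕ, 1 / (x + n) ^ p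

lemma summable_T {c : ℝ} (hc : 0 < c) {p : ℕ} (hp : 2 ≤ p) :
    Summable fun n : ℕ => 1 / (c + n) ^ p := by
  have h2 : Summable fun n : ℕ => 1 / ((n : ℝ) + 1) ^ 2 := by
    have := Real.summable_one_div_nat_pow.mpr one_lt_two
    exact_mod_cast (summable_nat_add_iff 1).mpr this
  set M : ℝ := max 1 (1 / c) with hM
  have hM1 : (1:ℝ) ≤ M := le_max_left _ _
  have hM0 : (0:ℝ) < M := by linarith
  refine Summable.of_nonneg_of_le (fun n => by positivity)
    (fun n => ?_) (((h2.mul_left (M ^ 2)).mul_left (1 / c ^ (p - 2))))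
  have hcn : (0:ℝ) < c + n := by positivity
  have hn1 : (0:ℝ) < (n:ℝ) + 1 := by positivity
  have key : (n:ℝ) + 1 ≤ M * (c + n) := by
    rcases le_total 1 c with h | h
    · calc (n:ℝ) + 1 ≤ c + n := by linarith
      _ ≤ M * (c + n) := le_mul_of_one_le_left hcn.le hM1
    · have : M = 1 / c := by rw [hM, max_eq_right]; rw [le_div_iff₀ hc]; linarith
      rw [this, div_mul_eq_mul_div, le_div_iff₀ hc]
      nlinarith
  have h1 : 1 / (c + n) ^ p ≤ 1 / c ^ (p - 2) * (1 / (c + n) ^ 2) := by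
    rw [div_mul_div_comm, one_mul, div_le_div_iff₀ (by positivity) (by positivity), one_mul,
      one_mul]
    calc c ^ (p - 2) * (c + n) ^ 2 ≤ (c + n) ^ (p - 2) * (c + n) ^ 2 := by
          gcongr; linarith
    _ = (c + n) ^ p := by rw [← pow_add]; congr 1; omega
  have h2' : 1 / (c + n) ^ 2 ≤ M ^ 2 * (1 / ((n:ℝ) + 1) ^ 2) := by
    rw [mul_one_div, div_le_div_iff₀ (by positivity) (by positivity), one_mul]
    calc ((n:ℝ) + 1) ^ 2 ≤ (M * (c + n)) ^ 2 := by
          apply pow_le_pow_left₀ hn1.le key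
    _ = M ^ 2 * (c + n) ^ 2 := by ring
  calc 1 / (c + n) ^ p ≤ 1 / c ^ (p - 2) * (1 / (c + n) ^ 2) := h1
  _ ≤ 1 / c ^ (p - 2) * (M ^ 2 * (1 / ((n:ℝ) + 1) ^ 2)) := by
      apply mul_le_mul_of_nonneg_left h2' (by positivity)

end PG

namespace PG
open PG

lemma hasDerivAt_term (n : ℕ) (p : ℕ) (hp : 1 ≤ p) {y : ℝ} (hy : 0 < y + n) :
    HasDerivAt (fun z : ℝ => 1 / (z + n) ^ p) (-(p : ℝ) / (y + n) ^ (p + 1)) y := by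
  have h := (((hasDerivAt_id y).add_const (n : ℝ)).pow p).inv
    (pow_ne_zero _ hy.ne')
  simp only [one_div, id] at h ⊢
  refine h.congr_deriv ?_
  simp only [Pi.pow_apply]
  rw [mul_one, neg_div, neg_div, neg_inj, div_eq_div_iff (by positivity) (by positivity),
    ← pow_mul, mul_assoc, ← pow_add, show p - 1 + (p + 1) = p * 2 by omega]

lemma isPreconn_Ioi (c : ℝ) : IsPreconnected (Set.Ioi c) :=
  (convex_Ioi c).isPreconnected

lemma hasDerivAt_T {p : ℕ} (hp : 2 ≤ p) {x : ℝ} (hx : 0 < x) :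
    HasDerivAt (T p) (-(p : ℝ) * T (p + 1) x) x := by
  have hx2 : 0 < x / 2 := half_pos hx
  have hsum : Summable fun n : ℕ => (p : ℝ) / (x / 2 + n) ^ (p + 1) := by
    have := (summable_T hx2 (by omega : 2 ≤ p + 1)).mul_left (p : ℝ)
    simpa [div_eq_mul_inv] using this
  have key := hasDerivAt_tsum_of_isPreconnected hsum isOpen_Ioi (isPreconn_Ioi (x/2))
    (g := fun (n : ℕ) (z : ℝ) => 1 / (z + n) ^ p)
    (g' := fun (n : ℕ) (y : ℝ) => -(p : ℝ) / (y + n) ^ (p + 1))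
    (fun n y hy => hasDerivAt_term n p (by omega) (by linarith [Set.mem_Ioi.mp hy, half_pos hx, (n.cast_nonneg : (0:ℝ) ≤ n)]))
    (fun n y hy => ?_) (Set.mem_Ioi.mpr (half_lt_self hx)) (summable_T hx hp)
    (Set.mem_Ioi.mpr (half_lt_self hx))
  · have : (∑' n : ℕ, -(p : ℝ) / (x + n) ^ (p + 1)) = -(p : ℝ) * T (p + 1) x := by
      rw [T, ← tsum_mul_left]
      congr 1; funext n; rw [mul_one_div, neg_div]
    rw [← this]
    exact key
  · have hy' : x / 2 < y := hy
    have h1 : (0:ℝ) < x / 2 + n := by positivity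
    have h2 : (0:ℝ) < y + n := by linarith
    rw [Real.norm_eq_abs, abs_div, abs_neg, abs_of_nonneg (by positivity : (0:ℝ) ≤ (p:ℝ)),
      abs_of_nonneg (by positivity)]
    gcongr <;> linarith

end PG

namespace PG

noncomputable def g (x : ℝ) : ℝ := ∑' n : ℕ, (1 / ((n : ℝ) + 1) - 1 / (x + n))

lemma summable_g {x : ℝ} (hx : 0 < x) :
    Summable fun n : ℕ => (1 / ((n : ℝ) + 1) - 1 / (x + n)) := by
  set M : ℝ := max 1 (1 / x) with hM
  have hM1 : (1:ℝ) ≤ M := le_max_left _ _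
  have h2 : Summable fun n : ℕ => 1 / ((n : ℝ) + 1) ^ 2 := by
    have := Real.summable_one_div_nat_pow.mpr one_lt_two
    exact_mod_cast (summable_nat_add_iff 1).mpr this
  refine Summable.of_norm_bounded ((h2.mul_left (|x - 1| * M))) (fun n => ?_)
  have hxn : (0:ℝ) < x + n := by positivity
  have hn1 : (0:ℝ) < (n:ℝ) + 1 := by positivity
  have key : (n:ℝ) + 1 ≤ M * (x + n) := by
    rcases le_total 1 x with h | h
    · calc (n:ℝ) + 1 ≤ x + n := by linarith
      _ ≤ M * (x + n) := le_mul_of_one_le_left hxn.le hM1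
    · have hMx : M = 1 / x := by
        rw [hM, max_eq_right]; rw [le_div_iff₀ hx]; linarith
      rw [hMx, div_mul_eq_mul_div, le_div_iff₀ hx]
      nlinarith
  have heq : 1 / ((n : ℝ) + 1) - 1 / (x + n) = (x - 1) / (((n:ℝ) + 1) * (x + n)) := by
    field_simp
    ring
  rw [heq, Real.norm_eq_abs, abs_div,
    abs_of_pos (by positivity : (0:ℝ) < ((n:ℝ) + 1) * (x + n)), mul_one_div,
    div_le_div_iff₀ (by positivity) (by positivity)]
  have hk : ((n:ℝ) + 1) ^ 2 ≤ M * (x + n) * ((n:ℝ) + 1) := by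
    rw [sq]
    exact mul_le_mul_of_nonneg_right key hn1.le
  nlinarith [abs_nonneg (x - 1)]

lemma hasDerivAt_g {x : ℝ} (hx : 0 < x) : HasDerivAt g (T 2 x) x := by
  have hx2 : 0 < x / 2 := half_pos hx
  have hsum : Summable fun n : ℕ => 1 / (x / 2 + (n:ℝ)) ^ 2 := summable_T hx2 le_rfl
  have key := hasDerivAt_tsum_of_isPreconnected hsum isOpen_Ioi (isPreconn_Ioi (x/2))
    (g := fun (n : ℕ) (z : ℝ) => 1 / ((n : ℝ) + 1) - 1 / (z + n))
    (g' := fun (n : ℕ) (y : ℝ) => 1 / (y + n) ^ 2)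
    (fun n y hy => ?_) (fun n y hy => ?_)
    (Set.mem_Ioi.mpr (half_lt_self hx)) (summable_g hx) (Set.mem_Ioi.mpr (half_lt_self hx))
  · exact key
  · -- differentiability of each term
    have hyn : (0:ℝ) < y + n := by
      linarith [Set.mem_Ioi.mp hy, half_pos hx, (n.cast_nonneg : (0:ℝ) ≤ n)]
    have h := (hasDerivAt_term n 1 le_rfl hyn).const_sub (1 / ((n : ℝ) + 1))
    simpa [neg_div] using h
  · -- bound
    have hy' : x / 2 < y := hy
    have h1 : (0:ℝ) < x / 2 + n := by positivity
    have h2 : (0:ℝ) < y + n := by linarith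
    rw [Real.norm_eq_abs, abs_of_nonneg (by positivity)]
    exact one_div_le_one_div_of_le (by positivity) (by nlinarith)

end PG

namespace PG

noncomputable def f : ℝ → ℝ := fun x => Real.log (Real.Gamma x)

noncomputable def H (N : ℕ) : ℝ := ∑ i ∈ Finset.range N, 1 / ((i : ℝ) + 1)

lemma f_diff {x : ℝ} (hx : 0 < x) : DifferentiableAt ℝ f x :=
  (Real.differentiableAt_Gamma fun m => by nlinarith [Nat.cast_nonneg (α := ℝ) m]).log
    (Real.Gamma_ne_zero fun m => by nlinarith [Nat.cast_nonneg (α := ℝ) m])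

lemma deriv_f_rec {x : ℝ} (hx : 0 < x) : deriv f (x + 1) = deriv f x + 1 / x := by
  rw [← deriv_comp_add_const, one_div, ← Real.deriv_log, ← deriv_add (f_diff hx)
    (Real.differentiableAt_log hx.ne')]
  apply Filter.EventuallyEq.deriv_eq
  filter_upwards [eventually_gt_nhds hx] with y hy
  show f (y + 1) = f y + Real.log y
  simp only [f]
  rw [Real.Gamma_add_one hy.ne', Real.log_mul hy.ne' (Real.Gamma_pos_of_pos hy).ne', add_comm]

lemma deriv_f_mono : MonotoneOn (deriv f) (Set.Ioi 0) :=
  Real.convexOn_log_Gamma.monotoneOn_deriv fun _ hx => f_diff hx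

lemma H_succ (N : ℕ) : H (N + 1) = H N + 1 / ((N : ℝ) + 1) := Finset.sum_range_succ _ _

lemma deriv_f_nat (N : ℕ) : deriv f ((N : ℝ) + 1) = deriv f 1 + H N := by
  induction N with
  | zero => simp [H]
  | succ n ih =>
    have h := deriv_f_rec (x := (n : ℝ) + 1) (by positivity)
    push_cast
    rw [H_succ]
    rw [show (n : ℝ) + 1 + 1 = ((n : ℝ) + 1) + 1 by ring, h, ih]
    ring

lemma deriv_f_shift {x : ℝ} (hx : 0 < x) (N : ℕ) :
    deriv f (x + N) = deriv f x + ∑ i ∈ Finset.range N, 1 / (x + i) := by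
  induction N with
  | zero => simp
  | succ n ih =>
    have h := deriv_f_rec (x := x + n) (by positivity)
    push_cast
    rw [show x + ((n : ℝ) + 1) = (x + n) + 1 by ring, h, ih, Finset.sum_range_succ]
    ring

lemma H_sub_le (b c : ℕ) : H (b + c) - H b ≤ (c : ℝ) / ((b : ℝ) + 1) := by
  have h : H (b + c) = H b + ∑ i ∈ Finset.range c, 1 / ((b : ℝ) + (i : ℝ) + 1) := by
    rw [H, H, Finset.sum_range_add]
    congr 1
    refine Finset.sum_congr rfl fun i _ => ?_
    push_cast
    ring_nf
  rw [h]
  have hb : ∀ i ∈ Finset.range c, 1 / ((b : ℝ) + (i : ℝ) + 1) ≤ 1 / ((b : ℝ) + 1) := by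
    intro i _
    apply one_div_le_one_div_of_le (by positivity)
    have : (0:ℝ) ≤ i := i.cast_nonneg
    linarith
  calc H b + ∑ i ∈ Finset.range c, 1 / ((b : ℝ) + (i : ℝ) + 1) - H b
      = ∑ i ∈ Finset.range c, 1 / ((b : ℝ) + (i : ℝ) + 1) := by ring
  _ ≤ ∑ _i ∈ Finset.range c, 1 / ((b : ℝ) + 1) := Finset.sum_le_sum hb
  _ = (c : ℝ) / ((b : ℝ) + 1) := by
      rw [Finset.sum_const, Finset.card_range, nsmul_eq_mul, mul_one_div]

lemma deriv_f_eq {x : ℝ} (hx : 0 < x) : deriv f x = deriv f 1 + g x := by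
  set d := deriv f with hd
  obtain ⟨m, hm0, hxm⟩ : ∃ m : ℕ, 0 < m ∧ x ≤ m :=
    ⟨⌈x⌉₊, Nat.ceil_pos.mpr hx, Nat.le_ceil x⟩
  obtain ⟨m', rfl⟩ : ∃ m', m = m' + 1 := ⟨m - 1, by omega⟩
  have hA : ∀ N : ℕ, d (x + ((N : ℝ) + 1)) - d 1 - H (N + 1)
      = (d x - d 1) - (H (N + 1) - ∑ i ∈ Finset.range (N + 1), 1 / (x + i)) := by
    intro N
    have h := deriv_f_shift hx (N + 1)
    push_cast at h
    rw [← hd] at h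
    rw [h]
    ring
  have hps : ∀ K : ℕ, ∑ n ∈ Finset.range K, (1 / ((n : ℝ) + 1) - 1 / (x + n))
      = H K - ∑ i ∈ Finset.range K, 1 / (x + i) := fun K => Finset.sum_sub_distrib _ _
  have hconv : Tendsto (fun N : ℕ => H (N + 1) - ∑ i ∈ Finset.range (N + 1), 1 / (x + i))
      atTop (𝓝 (g x)) := by
    have h1 := (summable_g hx).hasSum.tendsto_sum_nat
    have h2 := h1.comp (tendsto_add_atTop_nat 1)
    refine h2.congr fun N => ?_
    simp only [Function.comp_apply]
    exact hps (N + 1)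
  have hconv2 : Tendsto (fun N : ℕ => d (x + ((N : ℝ) + 1)) - d 1 - H (N + 1)) atTop
      (𝓝 (d x - d 1 - g x)) := by
    simp only [hA]
    exact tendsto_const_nhds.sub hconv
  have hlow : ∀ N : ℕ, -(1 / ((N : ℝ) + 1)) ≤ d (x + ((N : ℝ) + 1)) - d 1 - H (N + 1) := by
    intro N
    have h1 : d ((N : ℝ) + 1) ≤ d (x + ((N : ℝ) + 1)) := by
      apply deriv_f_mono (Set.mem_Ioi.mpr (by positivity)) (Set.mem_Ioi.mpr (by positivity))
      linarith
    have h2 := deriv_f_nat N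
    have h3 := H_succ N
    rw [← hd] at h2
    linarith
  have hup : ∀ N : ℕ, d (x + ((N : ℝ) + 1)) - d 1 - H (N + 1) ≤ ((m' + 1 : ℕ) : ℝ) * (1 / ((N : ℝ) + 1)) := by
    intro N
    have h1 : d (x + ((N : ℝ) + 1)) ≤ d (((m' + 1 + N : ℕ) : ℝ) + 1) := by
      apply deriv_f_mono (Set.mem_Ioi.mpr (by positivity)) (Set.mem_Ioi.mpr (by positivity))
      have hxm' := hxm
      push_cast at hxm' ⊢
      linarith
    have h2 := deriv_f_nat (m' + 1 + N)
    rw [← hd] at h2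
    have h3 : H (m' + 1 + N) - H (N + 1) ≤ ((m' : ℕ) : ℝ) / ((N : ℝ) + 1 + 1) := by
      have h5 := H_sub_le (N + 1) m'
      rw [show N + 1 + m' = m' + 1 + N by omega] at h5
      push_cast at h5 ⊢
      linarith
    have h4 : ((m' : ℕ) : ℝ) / ((N : ℝ) + 1 + 1) ≤ ((m' + 1 : ℕ) : ℝ) * (1 / ((N : ℝ) + 1)) := by
      rw [mul_one_div, div_le_div_iff₀ (by positivity) (by positivity)]
      push_cast
      nlinarith [Nat.cast_nonneg (α := ℝ) N, Nat.cast_nonneg (α := ℝ) m']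
    linarith
  have hz1 : Tendsto (fun N : ℕ => -(1 / ((N : ℝ) + 1))) atTop (𝓝 0) := by
    simpa using (tendsto_one_div_add_atTop_nhds_zero_nat (𝕜 := ℝ)).neg
  have hz2 : Tendsto (fun N : ℕ => ((m' + 1 : ℕ) : ℝ) * (1 / ((N : ℝ) + 1))) atTop (𝓝 0) := by
    simpa using tendsto_one_div_add_atTop_nhds_zero_nat.const_mul ((m' + 1 : ℕ) : ℝ)
  have h0 : Tendsto (fun N : ℕ => d (x + ((N : ℝ) + 1)) - d 1 - H (N + 1)) atTop (𝓝 0) :=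
    tendsto_of_tendsto_of_tendsto_of_le_of_le hz1 hz2 hlow hup
  have := tendsto_nhds_unique hconv2 h0
  linarith

end PG

namespace PG

lemma pow_pair {a b : ℝ} (ha : 0 ≤ a) (hab : a ≤ b) {j m : ℕ} (hj : j ≤ m) :
    a ^ j * b ^ (m - j) + a ^ (m - j) * b ^ j ≤ a ^ m + b ^ m := by
  have h1 : 0 ≤ b ^ j - a ^ j := sub_nonneg.mpr (pow_le_pow_left₀ ha hab j)
  have h2 : 0 ≤ b ^ (m - j) - a ^ (m - j) := sub_nonneg.mpr (pow_le_pow_left₀ ha hab (m - j))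
  have hm1 : a ^ j * a ^ (m - j) = a ^ m := by rw [← pow_add]; congr 1; omega
  have hm2 : b ^ j * b ^ (m - j) = b ^ m := by rw [← pow_add]; congr 1; omega
  nlinarith [mul_nonneg h1 h2]

lemma key_poly {a b : ℝ} (ha : 0 ≤ a) (hab : a ≤ b) (k : ℕ) :
    2 * (a * b) * (∑ i ∈ Finset.range k, b ^ i * a ^ (k - 1 - i))
      ≤ (k : ℝ) * (a ^ (k + 1) + b ^ (k + 1)) := by
  have hb : 0 ≤ b := le_trans ha hab
  have hterm : ∀ i ∈ Finset.range k,
      a * b * (b ^ i * a ^ (k - 1 - i)) = a ^ (k - i) * b ^ (i + 1) := by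
    intro i hi
    have hik : i < k := Finset.mem_range.mp hi
    have e1 : a * a ^ (k - 1 - i) = a ^ (k - i) := by rw [← pow_succ']; congr 1; omega
    calc a * b * (b ^ i * a ^ (k - 1 - i)) = (a * a ^ (k - 1 - i)) * (b * b ^ i) := by ring
    _ = a ^ (k - i) * b ^ (i + 1) := by rw [e1, ← pow_succ']
  have hS : (a * b) * ∑ i ∈ Finset.range k, b ^ i * a ^ (k - 1 - i)
      = ∑ i ∈ Finset.range k, a ^ (k - i) * b ^ (i + 1) := by
    rw [Finset.mul_sum]; exact Finset.sum_congr rfl hterm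
  have hB : ∑ i ∈ Finset.range k, a ^ (k - i) * b ^ (i + 1)
      = ∑ i ∈ Finset.range k, a ^ (i + 1) * b ^ (k - i) := by
    rw [← Finset.sum_range_reflect (fun i => a ^ (i + 1) * b ^ (k - i)) k]
    refine Finset.sum_congr rfl fun i hi => ?_
    have hik : i < k := Finset.mem_range.mp hi
    congr 2 <;> omega
  have hsum : 2 * (a * b) * (∑ i ∈ Finset.range k, b ^ i * a ^ (k - 1 - i))
      = ∑ i ∈ Finset.range k, (a ^ (k - i) * b ^ (i + 1) + a ^ (i + 1) * b ^ (k - i)) := by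
    calc 2 * (a * b) * (∑ i ∈ Finset.range k, b ^ i * a ^ (k - 1 - i))
        = (a * b) * (∑ i ∈ Finset.range k, b ^ i * a ^ (k - 1 - i))
          + (a * b) * (∑ i ∈ Finset.range k, b ^ i * a ^ (k - 1 - i)) := by ring
    _ = ∑ i ∈ Finset.range k, a ^ (k - i) * b ^ (i + 1)
          + ∑ i ∈ Finset.range k, a ^ (i + 1) * b ^ (k - i) := by rw [hS, hB]
    _ = _ := Finset.sum_add_distrib.symm
  rw [hsum]
  calc ∑ i ∈ Finset.range k, (a ^ (k - i) * b ^ (i + 1) + a ^ (i + 1) * b ^ (k - i))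
      ≤ ∑ _i ∈ Finset.range k, (a ^ (k + 1) + b ^ (k + 1)) := by
        refine Finset.sum_le_sum fun i hi => ?_
        have hik : i < k := Finset.mem_range.mp hi
        have := pow_pair ha hab (j := i + 1) (m := k + 1) (by omega)
        have he : k + 1 - (i + 1) = k - i := by omega
        rw [he] at this
        linarith
  _ = (k : ℝ) * (a ^ (k + 1) + b ^ (k + 1)) := by
      rw [Finset.sum_const, Finset.card_range, nsmul_eq_mul]

lemma geom_repr {a b : ℝ} (hab : b = a + 1) (k : ℕ) :
    b ^ k - a ^ k = ∑ i ∈ Finset.range k, b ^ i * a ^ (k - 1 - i) := by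
  have := geom_sum₂_mul b a k
  rw [hab] at this ⊢
  simpa using this.symm

lemma trapezoid {a : ℝ} (ha : 0 < a) {k : ℕ} (hk : 1 ≤ k) :
    (1 / (k : ℝ)) * (1 / a ^ k - 1 / (a + 1) ^ k)
      ≤ (1 / a ^ (k + 1) + 1 / (a + 1) ^ (k + 1)) / 2 := by
  set b : ℝ := a + 1 with hb
  have hb0 : 0 < b := by rw [hb]; linarith
  have hab : a ≤ b := by rw [hb]; linarith
  have hk0 : (0:ℝ) < k := by exact_mod_cast hk
  have e1 : 1 / a ^ k - 1 / b ^ k = (b ^ k - a ^ k) / (a ^ k * b ^ k) := by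
    field_simp
  have e2 : 1 / a ^ (k + 1) + 1 / b ^ (k + 1)
      = (a ^ (k + 1) + b ^ (k + 1)) / (a ^ (k + 1) * b ^ (k + 1)) := by
    field_simp
    ring
  rw [e1, e2, one_div_mul_eq_div, div_div, div_div,
    div_le_div_iff₀ (by positivity) (by positivity)]
  have hkey : 2 * (a * b) * (b ^ k - a ^ k) ≤ (k : ℝ) * (a ^ (k + 1) + b ^ (k + 1)) := by
    rw [geom_repr hb k]
    exact key_poly ha.le hab k
  calc (b ^ k - a ^ k) * (a ^ (k + 1) * b ^ (k + 1) * 2)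
      = (2 * (a * b) * (b ^ k - a ^ k)) * (a ^ k * b ^ k) := by ring
  _ ≤ ((k : ℝ) * (a ^ (k + 1) + b ^ (k + 1))) * (a ^ k * b ^ k) := by
      apply mul_le_mul_of_nonneg_right hkey (by positivity)
  _ = (a ^ (k + 1) + b ^ (k + 1)) * (a ^ k * b ^ k * (k : ℝ)) := by ring

lemma step_upper {a : ℝ} (ha : 0 < a) {k : ℕ} (hk : 1 ≤ k) :
    1 / (a + 1) ^ (k + 1) ≤ (1 / (k : ℝ)) * (1 / a ^ k - 1 / (a + 1) ^ k) := by
  set b : ℝ := a + 1 with hb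
  have hb0 : 0 < b := by rw [hb]; linarith
  have hab : a ≤ b := by rw [hb]; linarith
  have hk0 : (0:ℝ) < k := by exact_mod_cast hk
  have hgeq : (k : ℝ) * a ^ (k - 1) ≤ b ^ k - a ^ k := by
    rw [geom_repr hb k]
    calc (k : ℝ) * a ^ (k - 1) = ∑ _i ∈ Finset.range k, a ^ (k - 1) := by
          rw [Finset.sum_const, Finset.card_range, nsmul_eq_mul]
    _ ≤ ∑ i ∈ Finset.range k, b ^ i * a ^ (k - 1 - i) := by
        refine Finset.sum_le_sum fun i hi => ?_
        have hik : i < k := Finset.mem_range.mp hi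
        have e : a ^ i * a ^ (k - 1 - i) = a ^ (k - 1) := by rw [← pow_add]; congr 1; omega
        calc a ^ (k - 1) = a ^ i * a ^ (k - 1 - i) := e.symm
        _ ≤ b ^ i * a ^ (k - 1 - i) := by
            apply mul_le_mul_of_nonneg_right (pow_le_pow_left₀ ha.le hab i) (by positivity)
  have e1 : 1 / a ^ k - 1 / b ^ k = (b ^ k - a ^ k) / (a ^ k * b ^ k) := by field_simp
  rw [e1, one_div_mul_eq_div, div_div,
    div_le_div_iff₀ (by positivity) (by positivity)]
  have ea : a ^ (k - 1) * a = a ^ k := by rw [← pow_succ]; congr 1; omega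
  calc 1 * (a ^ k * b ^ k * (k:ℝ)) = ((k:ℝ) * (a ^ (k - 1) * a)) * b ^ k := by rw [ea]; ring
  _ ≤ ((k:ℝ) * (a ^ (k - 1) * b)) * b ^ k := by
      have : a ^ (k - 1) * a ≤ a ^ (k - 1) * b :=
        mul_le_mul_of_nonneg_left hab (by positivity)
      apply mul_le_mul_of_nonneg_right (mul_le_mul_of_nonneg_left this hk0.le) (by positivity)
  _ ≤ (b ^ k - a ^ k) * b ^ (k + 1) := by
      have h2 : (k:ℝ) * a ^ (k - 1) * (b * b ^ k) ≤ (b ^ k - a ^ k) * (b * b ^ k) :=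
        mul_le_mul_of_nonneg_right hgeq (by positivity)
      calc ((k:ℝ) * (a ^ (k - 1) * b)) * b ^ k = (k:ℝ) * a ^ (k - 1) * (b * b ^ k) := by ring
      _ ≤ (b ^ k - a ^ k) * (b * b ^ k) := h2
      _ = (b ^ k - a ^ k) * b ^ (k + 1) := by rw [← pow_succ']

end PG

namespace PG

lemma tendsto_aux {x : ℝ} (hx : 0 < x) {k : ℕ} (hk : 1 ≤ k) (c : ℝ) :
    Filter.Tendsto (fun N : ℕ => c * (1 / (x + N) ^ k)) Filter.atTop (𝓝 0) := by
  have h1 : Filter.Tendsto (fun N : ℕ => x + (N : ℝ)) Filter.atTop Filter.atTop :=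
    Filter.tendsto_atTop_add_const_left _ x tendsto_natCast_atTop_atTop
  have h2 : Filter.Tendsto (fun N : ℕ => (x + (N : ℝ)) ^ k) Filter.atTop Filter.atTop :=
    (tendsto_pow_atTop (by omega)).comp h1
  have h3 : Filter.Tendsto (fun N : ℕ => ((x + (N : ℝ)) ^ k)⁻¹) Filter.atTop (𝓝 0) :=
    h2.inv_tendsto_atTop
  simpa [one_div] using (h3.const_mul c)

/-- Telescoping sum. -/
lemma hasSum_tele {x : ℝ} (hx : 0 < x) {k : ℕ} (hk : 1 ≤ k) (c : ℝ) (hc : 0 ≤ c) :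
    HasSum (fun n : ℕ => c * (1 / (x + n) ^ k) - c * (1 / (x + n + 1) ^ k))
      (c * (1 / x ^ k)) := by
  set G : ℕ → ℝ := fun n => c * (1 / (x + n) ^ k) with hG
  have hfun : ∀ n : ℕ, c * (1 / (x + n) ^ k) - c * (1 / (x + n + 1) ^ k) = G n - G (n + 1) := by
    intro n
    simp only [hG]
    push_cast
    ring_nf
  have hnn : ∀ n : ℕ, 0 ≤ G n - G (n + 1) := by
    intro n
    rw [← hfun n]
    have h1 : (0:ℝ) < x + n := by positivity
    have h2 : (1:ℝ) / (x + n + 1) ^ k ≤ 1 / (x + n) ^ k := by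
      apply one_div_le_one_div_of_le (by positivity)
      exact pow_le_pow_left₀ (by positivity) (by linarith) k
    have := mul_le_mul_of_nonneg_left h2 hc
    linarith
  have hps : ∀ N : ℕ, ∑ i ∈ Finset.range N, (G i - G (i + 1)) = G 0 - G N :=
    fun N => Finset.sum_range_sub' G N
  have hres : HasSum (fun n : ℕ => G n - G (n + 1)) (c * (1 / x ^ k)) := by
    rw [hasSum_iff_tendsto_nat_of_nonneg hnn]
    simp only [hps]
    have h0 : Filter.Tendsto (fun N : ℕ => G N) Filter.atTop (𝓝 0) := tendsto_aux hx hk c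
    have h1 : Filter.Tendsto (fun N : ℕ => G 0 - G N) Filter.atTop (𝓝 (G 0 - 0)) :=
      tendsto_const_nhds.sub h0
    simpa [hG] using h1
  refine HasSum.congr_fun hres fun n => hfun n

set_option maxHeartbeats 1000000 in
lemma T_bounds {x : ℝ} (hx : 0 < x) {k : ℕ} (hk : 1 ≤ k) :
    (1 / (k:ℝ)) * (1 / x ^ k) + (1 / 2) * (1 / x ^ (k + 1)) ≤ T (k + 1) x ∧
    T (k + 1) x ≤ (1 / (k:ℝ)) * (1 / x ^ k) + 1 / x ^ (k + 1) := by
  unfold T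
  have hk0 : (0:ℝ) < k := by exact_mod_cast hk
  have hsumf : Summable fun n : ℕ => 1 / (x + n) ^ (k + 1) := summable_T hx (by omega)
  have hteleF := hasSum_tele hx hk (1 / (k:ℝ)) (by positivity)
  have htelef := hasSum_tele hx (le_trans hk (Nat.le_succ k)) (1 / (2:ℝ)) (by norm_num)
  constructor
  · -- lower bound
    have hsumG := hteleF.add htelef
    have hterm : ∀ n : ℕ,
        (1 / (k:ℝ)) * (1 / (x + n) ^ k) - (1 / (k:ℝ)) * (1 / (x + n + 1) ^ k)
          + ((1 / (2:ℝ)) * (1 / (x + n) ^ (k + 1)) - (1 / (2:ℝ)) * (1 / (x + n + 1) ^ (k + 1)))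
          ≤ 1 / (x + n) ^ (k + 1) := by
      intro n
      have ha : (0:ℝ) < x + n := by positivity
      have htr := trapezoid ha hk
      have e : x + (n:ℝ) + 1 = (x + n) + 1 := by ring
      rw [e]
      nlinarith [htr]
    have hle := hasSum_le hterm hsumG hsumf.hasSum
    exact hle
  · -- upper bound
    have hshift : Summable fun n : ℕ => 1 / (x + (n + 1 : ℕ)) ^ (k + 1) :=
      (summable_nat_add_iff 1).mpr hsumf
    have hshift' : Summable fun n : ℕ => 1 / (x + n + 1) ^ (k + 1) := by
      refine hshift.congr fun n => ?_
      push_cast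
      ring_nf
    have hT0 : (∑' n : ℕ, 1 / (x + n) ^ (k + 1))
        = 1 / x ^ (k + 1) + ∑' n : ℕ, 1 / (x + n + 1) ^ (k + 1) := by
      rw [hsumf.tsum_eq_zero_add]
      norm_num
      congr 1
      funext n
      push_cast
      ring_nf
    have hterm : ∀ n : ℕ, 1 / (x + n + 1) ^ (k + 1)
        ≤ (1 / (k:ℝ)) * (1 / (x + n) ^ k) - (1 / (k:ℝ)) * (1 / (x + n + 1) ^ k) := by
      intro n
      have ha : (0:ℝ) < x + n := by positivity
      have hsu := step_upper ha hk
      have e : x + (n:ℝ) + 1 = (x + n) + 1 := by ring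
      rw [e]
      nlinarith [hsu]
    have hle := Summable.tsum_le_tsum hterm hshift' hteleF.summable
    rw [hteleF.tsum_eq] at hle
    rw [hT0]
    linarith

end PG

namespace PG

lemma iteratedDeriv_f : ∀ k : ℕ, 1 ≤ k → ∀ x : ℝ, 0 < x →
    iteratedDeriv (k + 1) f x = (-1:ℝ) ^ (k + 1) * (Nat.factorial k) * T (k + 1) x := by
  intro k hk
  induction k, hk using Nat.le_induction with
  | base =>
    intro x hx
    have he : deriv f =ᶠ[𝓝 x] fun y => deriv f 1 + g y := by
      filter_upwards [isOpen_Ioi.mem_nhds (Set.mem_Ioi.mpr hx)] with y hy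
      exact deriv_f_eq hy
    have h2 : iteratedDeriv 2 f = deriv (deriv f) := by
      rw [iteratedDeriv_succ, iteratedDeriv_one]
    rw [show (1 + 1 : ℕ) = 2 from rfl, h2, he.deriv_eq,
      ((hasDerivAt_g hx).const_add (deriv f 1)).deriv]
    norm_num
  | succ n hn ih =>
    intro x hx
    have he : iteratedDeriv (n + 1) f =ᶠ[𝓝 x]
        fun y => (-1:ℝ) ^ (n + 1) * (Nat.factorial n) * T (n + 1) y := by
      filter_upwards [isOpen_Ioi.mem_nhds (Set.mem_Ioi.mpr hx)] with y hy
      exact ih y hy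
    rw [show n + 1 + 1 = (n + 1) + 1 from rfl, iteratedDeriv_succ, he.deriv_eq,
      ((hasDerivAt_T (by omega : 2 ≤ n + 1) hx).const_mul
        ((-1:ℝ) ^ (n + 1) * (Nat.factorial n))).deriv]
    rw [Nat.factorial_succ]
    push_cast
    ring

end PG


theorem stmt_3 (x : ℝ) (hx : 0 < x) (k : ℕ) (hk : 1 ≤ k) :
    (Nat.factorial (k - 1) : ℝ) / x ^ k + (Nat.factorial k : ℝ) / (2 * x ^ (k + 1))
      ≤ (-1 : ℝ) ^ (k + 1) * polygamma k x ∧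
    (-1 : ℝ) ^ (k + 1) * polygamma k x
      ≤ (Nat.factorial (k - 1) : ℝ) / x ^ k + (Nat.factorial k : ℝ) / x ^ (k + 1) := by
  have hid : polygamma k x = (-1:ℝ) ^ (k + 1) * (Nat.factorial k) * PG.T (k + 1) x :=
    PG.iteratedDeriv_f k hk x hx
  have hb := PG.T_bounds hx hk
  have hk0 : (0:ℝ) < k := by exact_mod_cast hk
  have hfac : (Nat.factorial k : ℝ) = k * (Nat.factorial (k - 1) : ℝ) := by
    obtain ⟨k', rfl⟩ : ∃ k', k = k' + 1 := ⟨k - 1, by omega⟩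
    rw [Nat.factorial_succ]
    push_cast
    simp
  have hsq : ((-1:ℝ) ^ (k + 1)) * ((-1:ℝ) ^ (k + 1)) = 1 := by
    rw [← pow_add]
    exact (neg_one_pow_eq_one_iff_even (by norm_num)).mpr ⟨k + 1, rfl⟩
  have hval : (-1 : ℝ) ^ (k + 1) * polygamma k x = (Nat.factorial k : ℝ) * PG.T (k + 1) x := by
    rw [hid, ← mul_assoc, ← mul_assoc, hsq, one_mul]
  have hfpos : (0:ℝ) < (Nat.factorial k : ℝ) := by exact_mod_cast k.factorial_pos
  have hfm1pos : (0:ℝ) < (Nat.factorial (k - 1) : ℝ) := by exact_mod_cast (k-1).factorial_pos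
  obtain ⟨hlo, hhi⟩ := hb
  constructor
  · rw [hval]
    have := mul_le_mul_of_nonneg_left hlo hfpos.le
    calc (Nat.factorial (k - 1) : ℝ) / x ^ k + (Nat.factorial k : ℝ) / (2 * x ^ (k + 1))
        = (Nat.factorial k : ℝ) * ((1 / (k:ℝ)) * (1 / x ^ k) + (1 / 2) * (1 / x ^ (k + 1))) := by
          rw [hfac]
          field_simp
    _ ≤ (Nat.factorial k : ℝ) * PG.T (k + 1) x := this
  · rw [hval]
    have := mul_le_mul_of_nonneg_left hhi hfpos.le
    calc (Nat.factorial k : ℝ) * PG.T (k + 1) x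
        ≤ (Nat.factorial k : ℝ) * ((1 / (k:ℝ)) * (1 / x ^ k) + 1 / x ^ (k + 1)) := this
    _ = (Nat.factorial (k - 1) : ℝ) / x ^ k + (Nat.factorial k : ℝ) / x ^ (k + 1) := by
          rw [hfac]
          field_simp
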